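/- If X is an infinite-dimensional real Banach space, then X endowed with its weak topology has property (B). -/

import Mathlib

/-- A topological space `X` has property (B) if it can be covered by countably many closed
nowhere-dense sets `A n` such that every compact subset of `X` is contained in some `A n`. -/
def PropertyB (X : Type*) [TopologicalSpace X] : Prop :=
  ∃ A : ℕ → Set X,
    (∀ n, IsClosed (A n)) ∧ (∀ n, interior (A n) = ∅) ∧
    (⋃ n, A n) = Set.univ ∧
    ∀ C : Set X, IsCompact C → ∃ n, C ⊆ A n

open Filter Topology Metric NormedSpace

section Aux

variable {X : Type*} [NormedAddCommGroup X] [NormedSpace ℝ X]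

/-- In an infinite-dimensional space, finitely many functionals have a common nonzero
kernel vector. -/
lemma exists_ne_zero_mem_ker (hinf : ¬ FiniteDimensional ℝ X)
    (I : Set (X →L[ℝ] ℝ)) (hI : I.Finite) :
    ∃ y : X, y ≠ 0 ∧ ∀ f ∈ I, f y = 0 := by
  classical
  have : Fintype I := hI.fintype
  by_contra h
  push_neg at h
  apply hinf
  let L : X →ₗ[ℝ] (I → ℝ) := LinearMap.pi fun f => ((f : X →L[ℝ] ℝ) : X →ₗ[ℝ] ℝ)
  have hL : Function.Injective L := by
    rw [← LinearMap.ker_eq_bot, LinearMap.ker_eq_bot']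
    intro y hy
    by_contra hy0
    obtain ⟨f, hf, hfy⟩ := h y hy0
    exact hfy (congrFun hy ⟨f, hf⟩)
  exact FiniteDimensional.of_injective L hL

/-- Every weak neighborhood of a point in an infinite-dimensional normed space contains a
full affine line. -/
lemma exists_line_subset_of_mem_nhds (hinf : ¬ FiniteDimensional ℝ X)
    {x : WeakSpace ℝ X} {U : Set (WeakSpace ℝ X)} (hU : U ∈ 𝓝 x) :
    ∃ y : X, y ≠ 0 ∧ ∀ t : ℝ, x + t • (toWeakSpace ℝ X y) ∈ U := by
  classical
  set F : WeakSpace ℝ X → ((X →L[ℝ] ℝ) → ℝ) :=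
    fun z f => (topDualPairing ℝ X).flip z f with hF
  have hnhds : (𝓝 x) = Filter.comap F (𝓝 (F x)) := nhds_induced F x
  rw [hnhds, Filter.mem_comap] at hU
  obtain ⟨V, hV, hVU⟩ := hU
  rw [nhds_pi, Filter.mem_pi] at hV
  obtain ⟨I, hIfin, t, ht, htV⟩ := hV
  obtain ⟨y, hy0, hyI⟩ := exists_ne_zero_mem_ker hinf I hIfin
  refine ⟨y, hy0, fun s => ?_⟩
  apply hVU
  have hmem : F (x + s • (toWeakSpace ℝ X y)) ∈ I.pi t := by
    intro f hf
    have hFz : F (x + s • (toWeakSpace ℝ X y)) f = F x f + s * f y := by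
      show (topDualPairing ℝ X).flip ((toWeakSpace ℝ X).symm (x + s • (toWeakSpace ℝ X y))) f =
        (topDualPairing ℝ X).flip ((toWeakSpace ℝ X).symm x) f + s * f y
      rw [map_add, map_smul, LinearEquiv.symm_apply_apply, map_add, map_smul]
      rfl
    rw [hFz, hyI f hf, mul_zero, add_zero]
    exact mem_of_mem_nhds (ht f)
  exact Set.mem_preimage.mpr (htV hmem)

end Aux

/-- If `X` is an infinite-dimensional real Banach space, then `X` endowed with its weak
topology has property (B). -/
theorem statement6 (X : Type*) [NormedAddCommGroup X] [NormedSpace ℝ X] [CompleteSpace X]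
    (hinf : ¬ FiniteDimensional ℝ X) :
    PropertyB (WeakSpace ℝ X) := by
  classical
  set e := toWeakSpace ℝ X with he
  refine ⟨fun n => e '' Metric.closedBall (0 : X) n, ?_, ?_, ?_, ?_⟩
  · -- closed
    intro n
    have hconv : Convex ℝ (Metric.closedBall (0 : X) n) := convex_closedBall 0 n
    have h := hconv.toWeakSpace_closure ℝ
    rw [(Metric.isClosed_closedBall).closure_eq] at h
    simp only [he]
    rw [h]
    exact isClosed_closure
  · -- empty interior
    intro n
    rw [Set.eq_empty_iff_forall_notMem]
    intro x hx
    have hnh : (e '' Metric.closedBall (0 : X) n) ∈ 𝓝 x :=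
      mem_interior_iff_mem_nhds.mp hx
    obtain ⟨y, hy0, hy⟩ := exists_line_subset_of_mem_nhds hinf hnh
    have hbd : ∀ t : ℝ, ‖e.symm x + t • y‖ ≤ n := by
      intro t
      obtain ⟨w, hw, hwe⟩ := hy t
      have : e.symm (x + t • e y) = e.symm x + t • y := by
        rw [map_add, map_smul, e.symm_apply_apply]
      have hw' : w = e.symm x + t • y := by
        rw [← this, ← hwe, e.symm_apply_apply]
      rw [← hw']
      simpa [mem_closedBall_zero_iff] using hw
    set s : ℝ := (n + ‖e.symm x‖ + 1) / ‖y‖ with hs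
    have hy0' : (0:ℝ) < ‖y‖ := norm_pos_iff.mpr hy0
    have h1 : ‖s • y‖ ≤ ‖e.symm x + s • y‖ + ‖e.symm x‖ := by
      have := norm_sub_le (e.symm x + s • y) (e.symm x)
      simpa using this
    have h2 : ‖s • y‖ = n + ‖e.symm x‖ + 1 := by
      rw [norm_smul, Real.norm_eq_abs, hs, abs_div, abs_of_nonneg (norm_nonneg y)]
      have hnn : (0:ℝ) ≤ n + ‖e.symm x‖ + 1 := by positivity
      rw [abs_of_nonneg hnn]
      field_simp
    have := hbd s
    rw [h2] at h1
    linarith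
  · -- covers
    rw [Set.eq_univ_iff_forall]
    intro z
    refine Set.mem_iUnion.mpr ⟨⌈‖e.symm z‖⌉₊, ⟨e.symm z, ?_, e.apply_symm_apply z⟩⟩
    simpa [mem_closedBall_zero_iff] using Nat.le_ceil ‖e.symm z‖
  · -- compact sets are bounded
    intro C hC
    have hpt : ∀ f : X →L[ℝ] ℝ, ∃ M : ℝ, ∀ c : C, ‖f (e.symm c.1)‖ ≤ M := by
      intro f
      have hcont : Continuous fun z : WeakSpace ℝ X => (topDualPairing ℝ X).flip z f :=
        WeakBilin.eval_continuous _ f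
      have himg : IsCompact ((fun z : WeakSpace ℝ X =>
          (topDualPairing ℝ X).flip z f) '' C) := hC.image hcont
      obtain ⟨M, hM⟩ := (isBounded_iff_forall_norm_le).mp himg.isBounded
      refine ⟨M, fun c => ?_⟩
      have : f (e.symm c.1) = (topDualPairing ℝ X).flip c.1 f := rfl
      rw [this]
      exact hM _ ⟨c.1, c.2, rfl⟩
    have hbs : ∃ C' : ℝ, ∀ c : C,
        ‖inclusionInDoubleDual ℝ X (e.symm c.1)‖ ≤ C' := by
      apply banach_steinhaus (𝕜 := ℝ) (𝕜₂ := ℝ)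
        (g := fun c : C => inclusionInDoubleDual ℝ X (e.symm c.1))
      intro f
      obtain ⟨M, hM⟩ := hpt f
      exact ⟨M, fun c => hM c⟩
    obtain ⟨C', hC'⟩ := hbs
    refine ⟨⌈C'⌉₊, fun z hz => ?_⟩
    refine ⟨e.symm z, ?_, e.apply_symm_apply z⟩
    have hnorm : ‖e.symm z‖ = ‖inclusionInDoubleDual ℝ X (e.symm z)‖ :=
      ((inclusionInDoubleDualLi ℝ (E := X)).norm_map (e.symm z)).symm
    have h1 : ‖e.symm z‖ ≤ C' := by
      rw [hnorm]; exact hC' ⟨z, hz⟩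
    have h2 : C' ≤ ⌈C'⌉₊ := Nat.le_ceil C'
    simp only [mem_closedBall_zero_iff]
    linarith
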